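/- arXiv:1808.06804 — 5 statements merged into one kernel-verified Lean document; each statement's English description precedes it below -/
import Mathlib

section
/- Let π : A → B be a G-injective equivariant embedding and φ : A → C any G-equivariant injective *-homomorphism. Then for every a in the algebraic crossed product C_c(G,A), the norm of a in B⋊_max G (via π) is at most the norm of a in C⋊_max G (via φ). Consequently, the completion of C_c(G,A) inside B⋊_max G realizes the injective crossed product norm ‖a‖_inj = inf over all equivariant embeddings ι : A → D of ‖(ι⋊G)(a)‖_{D⋊_max G}. -/
open Function

/-- A point-norm continuous action of a topological group `G` on a (non-unital) C⋆-algebra `A`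
by ⋆-automorphisms. -/
structure GAct (G : Type) [Monoid G] [TopologicalSpace G]
    (A : Type) [NonUnitalCStarAlgebra A] : Type where
  act : G → A → A
  act_one : ∀ a, act 1 a = a
  act_mul : ∀ g h a, act (g * h) a = act g (act h a)
  map_add : ∀ g a b, act g (a + b) = act g a + act g b
  map_smul : ∀ g (c : ℂ) a, act g (c • a) = c • act g a
  map_mul : ∀ g a b, act g (a * b) = act g a * act g b
  map_star : ∀ g a, act g (star a) = star (act g a)
  isometry : ∀ g a, ‖act g a‖ = ‖a‖
  cont : ∀ a, Continuous fun g => act g a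

section maps

variable {G : Type} [Monoid G] [TopologicalSpace G]
variable {A B : Type} [NonUnitalCStarAlgebra A] [NonUnitalCStarAlgebra B]

/-- A contractive completely positive (ccp) map between C⋆-algebras:
linear, contractive, and positive at all matrix levels (where an element of a
C⋆-algebra is positive iff it is of the form `star y * y`). -/
def IsCcp (φ : A → B) : Prop :=
  (∀ a b, φ (a + b) = φ a + φ b) ∧ (∀ (c : ℂ) (a : A), φ (c • a) = c • φ a) ∧
  (∀ a, ‖φ a‖ ≤ ‖a‖) ∧
  ∀ (n : ℕ) (M : Matrix (Fin n) (Fin n) A),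
    (∃ N : Matrix (Fin n) (Fin n) A, M = star N * N) →
      ∃ N' : Matrix (Fin n) (Fin n) B, M.map φ = star N' * N'

/-- A ⋆-homomorphism, as a predicate on functions. -/
def IsStarHom (φ : A → B) : Prop :=
  (∀ a b, φ (a + b) = φ a + φ b) ∧ (∀ (c : ℂ) (a : A), φ (c • a) = c • φ a) ∧
  (∀ a b, φ (a * b) = φ a * φ b) ∧ (∀ a, φ (star a) = star (φ a))

/-- Equivariance of a map with respect to given actions. -/
def Equivariant (α : GAct G A) (β : GAct G B) (φ : A → B) : Prop :=
  ∀ g a, φ (α.act g a) = β.act g (φ a)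

/-- A `G`-equivariant injective ⋆-homomorphism (an equivariant embedding). -/
def IsGEmbedding (α : GAct G A) (β : GAct G B) (φ : A → B) : Prop :=
  IsStarHom φ ∧ Injective φ ∧ Equivariant α β φ

/-- A map `φ : A → B` is `G`-injective if it extends to an equivariant ccp map along every
equivariant embedding of `A` into another `G`-C⋆-algebra. -/
def GInjectiveMap (α : GAct G A) (β : GAct G B) (φ : A → B) : Prop :=
  ∀ (C : Type) (_ : NonUnitalCStarAlgebra C) (γ : GAct G C) (ι : A → C),
    IsGEmbedding α γ ι →
    ∃ ψ : C → B, IsCcp ψ ∧ Equivariant γ β ψ ∧ ψ ∘ ι = φ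

/-- A `G`-C⋆-algebra `B` is `G`-injective if every equivariant ccp map into it is
`G`-injective. -/
def GInjectiveAlg (β : GAct G B) : Prop :=
  ∀ (A' : Type) (_ : NonUnitalCStarAlgebra A') (α : GAct G A') (φ : A' → B),
    IsCcp φ → Equivariant α β φ → GInjectiveMap α β φ

/-- Membership in the algebraic crossed product `C_c(G,A)`: continuous compactly
supported `A`-valued functions on `G`. -/
def CcFun (f : G → A) : Prop :=
  Continuous f ∧ HasCompactSupport f

end maps

section norms

variable (G : Type) [Monoid G] [TopologicalSpace G]

/-- The type of assignments of a crossed-product norm (such as `‖·‖_max` or `‖·‖_r`) to every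
`G`-C⋆-algebra; the norm is recorded as a function on all of `G → A`, thought of as restricted
to `C_c(G,A)`. -/
abbrev CPNorm : Type 1 :=
  ∀ (A : Type) [_inst : NonUnitalCStarAlgebra A], GAct G A → (G → A) → ℝ

variable {G}

/-- Functoriality of a crossed-product norm assignment for equivariant ccp maps:
an equivariant ccp map `ψ` induces a contraction on crossed products.  This is the
characteristic property of the maximal crossed product (functoriality for ccp maps)
which is used throughout the construction of the maximal injective crossed product. -/
def CcpFunctorial (N : CPNorm G) : Prop :=
  ∀ (A : Type) (_ : NonUnitalCStarAlgebra A) (B : Type) (_ : NonUnitalCStarAlgebra B)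
    (α : GAct G A) (β : GAct G B) (ψ : A → B), IsCcp ψ → Equivariant α β ψ →
    ∀ f : G → A, CcFun f → N B β (ψ ∘ f) ≤ N A α f

/-- The injective crossed-product norm associated to a given (maximal) crossed-product
norm assignment: the infimum over all equivariant embeddings `ι : A → B` of the norm of
the image of `f ∈ C_c(G,A)` in `B ⋊_max G`. -/
noncomputable def injNorm (maxN : CPNorm G) (A : Type) [NonUnitalCStarAlgebra A]
    (α : GAct G A) (f : G → A) : ℝ :=
  sInf { r : ℝ | ∃ (B : Type) (_ : NonUnitalCStarAlgebra B) (β : GAct G B) (ι : A → B),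
    IsGEmbedding α β ι ∧ r = maxN B β (ι ∘ f) }

end norms

open scoped CStarAlgebra in
lemma ccFun_comp_of_isStarHom
    {G : Type} [Monoid G] [TopologicalSpace G]
    {A B : Type} [NonUnitalCStarAlgebra A] [NonUnitalCStarAlgebra B]
    (ι : A → B) (h : IsStarHom ι) {f : G → A} (hf : CcFun f) : CcFun (ι ∘ f) := by
  obtain ⟨hadd, hsmul, hmul, hstar⟩ := h
  have hzero : ι 0 = 0 := by
    have := hsmul 0 0
    simpa using this
  let Φ : A →⋆ₙₐ[ℂ] B :=
    { toFun := ι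
      map_smul' := hsmul
      map_zero' := hzero
      map_add' := hadd
      map_mul' := hmul
      map_star' := hstar }
  have hcont : Continuous ι := map_continuous Φ
  exact ⟨hcont.comp hf.1, hf.2.comp_left hzero⟩

/-- Let `π : A → B` be a `G`-injective equivariant embedding and
`φ : A → C` any equivariant embedding.  Then for every `a ∈ C_c(G,A)` the norm of `a` in
`B ⋊_max G` (via `π`) is at most its norm in `C ⋊_max G` (via `φ`); consequently the
completion of `C_c(G,A)` inside `B ⋊_max G` realizes the injective crossed-product norm
`‖a‖_inj = inf_ι ‖(ι ⋊ G)(a)‖`. -/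

theorem g_injective_embedding_realizes_injNorm
    {G : Type} [Group G] [TopologicalSpace G] [IsTopologicalGroup G] [LocallyCompactSpace G]
    (maxN : CPNorm G) (hmax : CcpFunctorial maxN)
    {A B C : Type} [NonUnitalCStarAlgebra A] [NonUnitalCStarAlgebra B]
    [NonUnitalCStarAlgebra C]
    (α : GAct G A) (β : GAct G B) (γ : GAct G C)
    (π : A → B) (hπ : IsGEmbedding α β π) (hπinj : GInjectiveMap α β π)
    (φ : A → C) (hφ : IsGEmbedding α γ φ) :
    (∀ f : G → A, CcFun f → maxN B β (π ∘ f) ≤ maxN C γ (φ ∘ f)) ∧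
    (∀ f : G → A, CcFun f → maxN B β (π ∘ f) = injNorm maxN A α f) := by
  have key : ∀ (D : Type) (_ : NonUnitalCStarAlgebra D) (δ : GAct G D) (ι : A → D),
      IsGEmbedding α δ ι → ∀ f : G → A, CcFun f →
      maxN B β (π ∘ f) ≤ maxN D δ (ι ∘ f) := by
    intro D _ δ ι hι f hf
    obtain ⟨ψ, hψccp, hψeq, hψι⟩ := hπinj D _ δ ι hι
    have hcc : CcFun (ι ∘ f) := ccFun_comp_of_isStarHom ι hι.1 hf
    have h := hmax D _ B _ δ β ψ hψccp hψeq (ι ∘ f) hcc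
    rwa [← Function.comp_assoc, hψι] at h
  constructor
  · intro f hf
    exact key C _ γ φ hφ f hf
  · intro f hf
    have hmem : maxN B β (π ∘ f) ∈ { r : ℝ | ∃ (D : Type) (_ : NonUnitalCStarAlgebra D)
        (δ : GAct G D) (ι : A → D), IsGEmbedding α δ ι ∧ r = maxN D δ (ι ∘ f) } :=
      ⟨B, _, β, π, hπ, rfl⟩
    refine le_antisymm ?_ ?_
    · refine le_csInf ⟨_, hmem⟩ ?_
      rintro r ⟨D, _, δ, ι, hι, rfl⟩
      exact key D _ δ ι hι f hf
    · refine csInf_le ⟨maxN B β (π ∘ f), ?_⟩ hmem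
      rintro r ⟨D, _, δ, ι, hι, rfl⟩
      exact key D _ δ ι hι f hf
end

section
/- If A is a G-injective G-C*-algebra, then the injective crossed product coincides with the maximal crossed product: A⋊_inj G = A⋊_max G, i.e. ‖a‖_inj = ‖a‖_max for every a ∈ C_c(G,A). -/
open Function

open scoped CStarAlgebra in
/-- Package an `IsStarHom` as a bundled non-unital star algebra homomorphism. -/
noncomputable def IsStarHom.toBundled {A B : Type} [NonUnitalCStarAlgebra A]
    [NonUnitalCStarAlgebra B] {ι : A → B} (h : IsStarHom ι) : A →⋆ₙₐ[ℂ] B where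
  toFun := ι
  map_add' := h.1
  map_smul' := h.2.1
  map_mul' := h.2.2.1
  map_star' := h.2.2.2
  map_zero' := by
    have := h.1 0 0
    simp only [add_zero] at this
    exact left_eq_add.mp this

open scoped CStarAlgebra

/-- The identity map is ccp. -/
lemma isCcp_id {A : Type} [NonUnitalCStarAlgebra A] : IsCcp (id : A → A) := by
  refine ⟨fun _ _ => rfl, fun _ _ => rfl, fun _ => le_refl _, fun n M ⟨N, hN⟩ => ⟨N, ?_⟩⟩
  simpa [Matrix.map_id] using hN

/-- If `A` is a `G`-injective `G`-C⋆-algebra, then the injective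
crossed-product norm coincides with the maximal one: `A ⋊_inj G = A ⋊_max G`, i.e.
`‖a‖_inj = ‖a‖_max` for every `a ∈ C_c(G,A)`. -/
theorem injNorm_eq_maxNorm_of_G_injective
    {G : Type} [Group G] [TopologicalSpace G] [IsTopologicalGroup G] [LocallyCompactSpace G]
    (maxN : CPNorm G) (hmax : CcpFunctorial maxN)
    {A : Type} [NonUnitalCStarAlgebra A] (α : GAct G A)
    (hA : GInjectiveAlg α) :
    ∀ f : G → A, CcFun f → injNorm maxN A α f = maxN A α f := by
  intro f hf
  -- the set defining the infimum
  set S : Set ℝ := { r : ℝ | ∃ (B : Type) (_ : NonUnitalCStarAlgebra B) (β : GAct G B)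
    (ι : A → B), IsGEmbedding α β ι ∧ r = maxN B β (ι ∘ f) } with hS
  have hid_emb : IsGEmbedding α α (id : A → A) :=
    ⟨⟨fun _ _ => rfl, fun _ _ => rfl, fun _ _ => rfl, fun _ => rfl⟩,
      fun _ _ h => h, fun _ _ => rfl⟩
  have hmem : maxN A α f ∈ S := ⟨A, inferInstance, α, id, hid_emb, by simp [Function.id_comp]⟩
  -- lower bound: every element of S dominates maxN A α f
  have hlb : ∀ r ∈ S, maxN A α f ≤ r := by
    rintro r ⟨B, instB, β, ι, hemb, rfl⟩
    obtain ⟨hhom, hinj, hequiv⟩ := hemb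
    obtain ⟨ψ, hψccp, hψequiv, hψι⟩ :=
      hA A inferInstance α id isCcp_id (fun _ _ => rfl) B instB β ι ⟨hhom, hinj, hequiv⟩
    -- ι is continuous and maps 0 to 0, so ι ∘ f ∈ C_c(G,B)
    have hccf : CcFun (ι ∘ f) := by
      have hcont : Continuous ι := by
        have := map_continuous hhom.toBundled
        exact this
      refine ⟨hcont.comp hf.1, ?_⟩
      have h0 : ι 0 = 0 := map_zero hhom.toBundled
      exact hf.2.comp_left h0
    have := hmax B instB A inferInstance β α ψ hψccp hψequiv (ι ∘ f) hccf
    have hfun : ψ ∘ (ι ∘ f) = f := by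
      rw [← Function.comp_assoc, hψι, Function.id_comp]
    rwa [hfun] at this
  exact le_antisymm (csInf_le ⟨maxN A α f, hlb⟩ hmem) (le_csInf ⟨_, hmem⟩ hlb)
end

section
/- The injective crossed product is the maximal injective crossed product functor: if ⋊_μ is any crossed product functor for G that takes injective equivariant *-homomorphisms to injective *-homomorphisms, then ‖a‖_μ ≤ ‖a‖_inj for all a ∈ C_c(G,A) and all G-C*-algebras A; equivalently the identity on C_c(G,A) extends to a surjection A⋊_inj G → A⋊_μ G. -/
open Function

set_option maxHeartbeats 1000000 in
/-- `⋊_inj` is the maximal injective crossed-product functor: if `⋊_μ` is any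
crossed-product functor for `G` (a norm assignment dominated by the maximal norm, functorial for
equivariant ⋆-homomorphisms) which is injective (it takes equivariant embeddings to injective,
i.e. isometric, ⋆-homomorphisms), then `‖a‖_μ ≤ ‖a‖_inj` for all `a ∈ C_c(G,A)`; equivalently
the identity on `C_c(G,A)` extends to a surjection `A ⋊_inj G → A ⋊_μ G`. -/
theorem injNorm_is_maximal_injective
    {G : Type} [Group G] [TopologicalSpace G] [IsTopologicalGroup G] [LocallyCompactSpace G]
    (maxN : CPNorm G) (hmax : CcpFunctorial maxN)
    (muN : CPNorm G)
    (hmu_le_max : ∀ (A : Type) (_ : NonUnitalCStarAlgebra A) (α : GAct G A)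
      (f : G → A), CcFun f → muN A α f ≤ maxN A α f)
    (hmu_func : ∀ (A : Type) (_ : NonUnitalCStarAlgebra A) (B : Type)
      (_ : NonUnitalCStarAlgebra B) (α : GAct G A) (β : GAct G B) (φ : A → B),
      IsStarHom φ → Equivariant α β φ → ∀ f : G → A, CcFun f →
        muN B β (φ ∘ f) ≤ muN A α f)
    (hmu_inj : ∀ (A : Type) (_ : NonUnitalCStarAlgebra A) (B : Type)
      (_ : NonUnitalCStarAlgebra B) (α : GAct G A) (β : GAct G B) (ι : A → B),
      IsGEmbedding α β ι → ∀ f : G → A, CcFun f → muN B β (ι ∘ f) = muN A α f)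
    {A : Type} [NonUnitalCStarAlgebra A] (α : GAct G A) :
    ∀ f : G → A, CcFun f → muN A α f ≤ injNorm maxN A α f := by
  intro f hf
  apply le_csInf
  · exact ⟨maxN A α (id ∘ f), A, ‹_›, α, id,
      ⟨⟨fun _ _ => rfl, fun _ _ => by simp, fun _ _ => rfl, fun _ => by simp⟩,
        Function.injective_id, fun _ _ => rfl⟩, rfl⟩
  · rintro r ⟨B, _, β, ι, hι, rfl⟩
    obtain ⟨⟨hadd, hsmul, hmul, hstar⟩, hinj, hequiv⟩ := hι
    have h0 : ι 0 = 0 := by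
      have := hadd 0 0
      rw [add_zero] at this
      exact left_eq_add.mp this
    let φ : A →⋆ₙₐ[ℂ] B :=
      { toFun := ι
        map_smul' := hsmul
        map_zero' := h0
        map_add' := hadd
        map_mul' := hmul
        map_star' := hstar }
    have hcont : Continuous ι := (NonUnitalStarAlgHom.isometry φ hinj).continuous
    have hcc : CcFun (ι ∘ f) := ⟨hcont.comp hf.1, hf.2.comp_left h0⟩
    calc muN A α f = muN B β (ι ∘ f) :=
          (hmu_inj A ‹_› B ‹_› α β ι ⟨⟨hadd, hsmul, hmul, hstar⟩, hinj, hequiv⟩ f hf).symm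
      _ ≤ maxN B β (ι ∘ f) := hmu_le_max B ‹_› β (ι ∘ f) hcc
end

section
/- Every G-injective G-C*-algebra has the G-equivariant weak expectation property (G-WEP). More generally, if A is a G-C*-algebra such that there is a G-invariant C*-subalgebra C of the G-continuous part A**_c of the bidual A** with A ⊆ C and C G-injective, then A has the G-WEP. -/
open Function

section aux

variable {G : Type} [Monoid G] [TopologicalSpace G]
variable {A B C' : Type} [NonUnitalCStarAlgebra A] [NonUnitalCStarAlgebra B]
  [NonUnitalCStarAlgebra C']

/-- Bundle an `IsStarHom` as a `NonUnitalStarAlgHom`. -/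
noncomputable def IsStarHom.toHom {φ : A → B} (h : IsStarHom φ) : A →⋆ₙₐ[ℂ] B where
  toFun := φ
  map_add' := h.1
  map_smul' := h.2.1
  map_mul' := h.2.2.1
  map_star' := h.2.2.2
  map_zero' := by
    have := h.1 0 0
    rw [add_zero] at this
    exact left_eq_add.mp this

lemma isCcp_of_isStarHom {φ : A → B} (h : IsStarHom φ) : IsCcp φ := by
  have hφ : ∀ a, h.toHom a = φ a := fun a => rfl
  refine ⟨h.1, h.2.1, fun a => ?_, fun n M ⟨N, hN⟩ => ⟨N.map φ, ?_⟩⟩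
  · rw [← hφ]; exact NonUnitalStarAlgHom.norm_apply_le h.toHom a
  · subst hN
    ext i j
    simp only [Matrix.map_apply, Matrix.mul_apply, Matrix.star_apply, ← hφ, map_sum,
      map_mul, map_star]

lemma isCcp_comp {φ : A → B} {ψ : B → C'} (hφ : IsCcp φ) (hψ : IsCcp ψ) : IsCcp (ψ ∘ φ) := by
  obtain ⟨ha, hs, hn, hp⟩ := hφ
  obtain ⟨ha', hs', hn', hp'⟩ := hψ
  refine ⟨fun a b => by simp [ha, ha'], fun c a => by simp [hs, hs'],
    fun a => le_trans (hn' _) (hn a), fun n M hM => ?_⟩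
  obtain ⟨N', hN'⟩ := hp n M hM
  obtain ⟨N'', hN''⟩ := hp' n (M.map φ) ⟨N', hN'⟩
  refine ⟨N'', ?_⟩
  rw [← hN'']
  ext i j
  simp [Matrix.map_apply]

end aux

/-- Every `G`-injective `G`-C⋆-algebra has the `G`-equivariant weak
expectation property; more generally, if `A` is a `G`-C⋆-algebra which admits a `G`-invariant
C⋆-subalgebra `C` of the `G`-continuous part of the bidual `A**` with `A ⊆ C` and `C`
`G`-injective, then `A` has the `G`-WEP.  Here the bidual datum is abstracted as a
`G`-C⋆-algebra `W` (playing `A**_c`) with the canonical equivariant embedding `e : A → W`, and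
the subalgebra `C` is the image of an equivariant embedding `m : D → W` of a `G`-injective
algebra `D` with `m ∘ i = e` for an equivariant embedding `i : A → D`.  The `G`-WEP conclusion:
for every equivariant embedding `ι : A → B` there is an equivariant ccp map `p : B → W` with
`p ∘ ι = e`. -/
theorem gwep_of_G_injective_subalgebra
    {G : Type} [Group G] [TopologicalSpace G] [IsTopologicalGroup G] [LocallyCompactSpace G]
    {A W D : Type} [NonUnitalCStarAlgebra A] [NonUnitalCStarAlgebra W]
    [NonUnitalCStarAlgebra D]
    (α : GAct G A) (ω : GAct G W) (δ : GAct G D)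
    (e : A → W) (he : IsGEmbedding α ω e)        -- the canonical inclusion `A → A**_c`
    (i : A → D) (hi : IsGEmbedding α δ i)
    (hD : GInjectiveAlg δ)
    (m : D → W) (hm : IsGEmbedding δ ω m) (hme : m ∘ i = e) :
    ∀ (B : Type) (_ : NonUnitalCStarAlgebra B) (β : GAct G B) (ι : A → B),
      IsGEmbedding α β ι →
      ∃ p : B → W, IsCcp p ∧ Equivariant β ω p ∧ p ∘ ι = e := by
  intro B _ β ι hι
  -- `i : A → D` is an equivariant ccp map, so by `G`-injectivity of `D` it extends along `ι`.
  obtain ⟨ψ, hψccp, hψeq, hψι⟩ :=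
    hD A ‹_› α i (isCcp_of_isStarHom hi.1) hi.2.2 B ‹_› β ι hι
  refine ⟨m ∘ ψ, isCcp_comp hψccp (isCcp_of_isStarHom hm.1),
    fun g b => by simp [Function.comp, hψeq g b, hm.2.2 g (ψ b)], ?_⟩
  calc (m ∘ ψ) ∘ ι = m ∘ (ψ ∘ ι) := rfl
    _ = m ∘ i := by rw [hψι]
    _ = e := hme
end

section
/- For any discrete group G, ℓ∞(G)⋊_max G = ℓ∞(G)⋊_inj G, i.e. the maximal norm on C_c(G, ℓ∞(G)) coincides with the injective crossed product norm. -/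
open Function

open Complex

lemma state_im_eq_zero {D : Type*} [CStarAlgebra D] [Nontrivial D] (φ : D →L[ℂ] ℂ)
    (hc : ∀ x, ‖φ x‖ ≤ ‖x‖) (h1 : φ 1 = 1) {x : D} (hx : IsSelfAdjoint x) :
    (φ x).im = 0 := by
  have key : ∀ s : ℝ, 2 * (φ x).im * s ≤ ‖x‖ ^ 2 := by
    intro s
    set c : ℂ := (s : ℂ) * I with hc'
    have hstar : star (x + c • 1) = x - c • 1 := by
      simp [star_smul, hx.star_eq, hc', map_mul, Complex.conj_I, sub_eq_add_neg, neg_smul]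
    have hcc : c * c = -(((s:ℂ))^2) := by rw [hc']; ring_nf; simp [Complex.I_sq]
    have hmul : star (x + c • 1) * (x + c • 1) = x * x + ((s : ℂ) ^ 2) • 1 := by
      rw [hstar]
      simp only [sub_mul, mul_add, smul_mul_assoc, mul_smul_comm, smul_smul, one_mul, mul_one]
      rw [smul_sub, smul_smul, hcc, neg_smul, sub_neg_eq_add]
      abel
    have h2 : ‖x + c • 1‖ ^ 2 ≤ ‖x‖ ^ 2 + s ^ 2 := by
      rw [sq, ← CStarRing.norm_star_mul_self, hmul]
      have h3 := norm_mul_le x x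
      have h4 : ‖((s:ℂ)^2) • (1:D)‖ = s ^ 2 := by
        rw [norm_smul, norm_one, mul_one, ← ofReal_pow, Complex.norm_real]
        exact abs_of_nonneg (sq_nonneg s)
      calc ‖x * x + ((s:ℂ)^2) • 1‖ ≤ ‖x * x‖ + ‖((s:ℂ)^2) • (1:D)‖ := norm_add_le _ _
        _ ≤ ‖x‖ ^ 2 + s ^ 2 := by rw [h4, sq]; linarith
    have hφ : φ (x + c • 1) = φ x + c := by
      rw [map_add, map_smul, h1, smul_eq_mul, mul_one]
    have h5 : ‖φ x + c‖ ^ 2 ≤ ‖x‖ ^ 2 + s ^ 2 := by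
      rw [← hφ]
      have := hc (x + c • 1)
      nlinarith [norm_nonneg (φ (x + c • 1)), norm_nonneg (x + c • 1)]
    have h6 : (φ x).re ^ 2 + ((φ x).im + s) ^ 2 ≤ ‖x‖ ^ 2 + s ^ 2 := by
      have : ‖φ x + c‖ ^ 2 = (φ x).re ^ 2 + ((φ x).im + s) ^ 2 := by
        rw [Complex.sq_norm, Complex.normSq_apply]
        simp [hc']
        ring
      linarith [this ▸ h5]
    nlinarith [sq_nonneg ((φ x).re), sq_nonneg ((φ x).im)]
  by_contra h
  set v := (φ x).im
  have hv : v ≠ 0 := h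
  have := key ((‖x‖ ^ 2 + 1) / (2 * v))
  have h2v : (2:ℝ) * v ≠ 0 := by simpa using hv
  rw [mul_div_cancel₀ _ h2v] at this
  linarith

lemma state_star_apply {D : Type*} [CStarAlgebra D] [Nontrivial D] (φ : D →L[ℂ] ℂ)
    (hc : ∀ x, ‖φ x‖ ≤ ‖x‖) (h1 : φ 1 = 1) (x : D) :
    φ (star x) = starRingEnd ℂ (φ x) := by
  obtain ⟨a, ha'⟩ : ∃ a : D, a = ((1/2 : ℂ)) • (x + star x) := ⟨_, rfl⟩
  obtain ⟨b, hb'⟩ : ∃ b : D, b = ((Complex.I/2 : ℂ)) • (star x - x) := ⟨_, rfl⟩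
  have hasa : IsSelfAdjoint a := by
    rw [ha', IsSelfAdjoint, star_smul, star_add, star_star]
    simp [add_comm]
  have hbsa : IsSelfAdjoint b := by
    rw [hb', IsSelfAdjoint, star_smul, star_sub, star_star]
    have h9 : star (Complex.I/2 : ℂ) = -(Complex.I/2) := by
      simp [Complex.star_def, map_div₀, Complex.conj_I, neg_div]
    rw [h9, neg_smul, ← smul_neg, neg_sub]
  have hx : x = a + Complex.I • b := by
    rw [ha', hb', smul_smul]
    have h8 : Complex.I * (Complex.I / 2) = -(1/2 : ℂ) := by
      rw [mul_div_assoc', Complex.I_mul_I, neg_div]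
    rw [h8]
    module
  have hsx : star x = a - Complex.I • b := by
    rw [ha', hb', smul_smul]
    have h8 : Complex.I * (Complex.I / 2) = -(1/2 : ℂ) := by
      rw [mul_div_assoc', Complex.I_mul_I, neg_div]
    rw [h8]
    module
  have hra : (starRingEnd ℂ) (φ a) = φ a :=
    Complex.conj_eq_iff_im.mpr (state_im_eq_zero φ hc h1 hasa)
  have hrb : (starRingEnd ℂ) (φ b) = φ b :=
    Complex.conj_eq_iff_im.mpr (state_im_eq_zero φ hc h1 hbsa)
  have hφx : φ x = φ a + Complex.I * φ b := by
    conv_lhs => rw [hx]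
    rw [map_add, map_smul, smul_eq_mul]
  have hφsx : φ (star x) = φ a - Complex.I * φ b := by
    rw [hsx, map_sub, map_smul, smul_eq_mul]
  rw [hφsx, hφx, map_add, map_mul, hra, hrb, Complex.conj_I]
  ring

lemma state_nonneg {D : Type*} [CStarAlgebra D] [Nontrivial D]
    [PartialOrder D] [StarOrderedRing D] (φ : D →L[ℂ] ℂ)
    (hc : ∀ x, ‖φ x‖ ≤ ‖x‖) (h1 : φ 1 = 1) {x : D} (hx : 0 ≤ x) :
    0 ≤ (φ x).re ∧ (φ x).im = 0 := by
  have hsa : IsSelfAdjoint x := .of_nonneg hx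
  have him : (φ x).im = 0 := state_im_eq_zero φ hc h1 hsa
  refine ⟨?_, him⟩
  set t : ℝ := ‖x‖ with ht'
  set y : D := algebraMap ℝ D t - x with hy'
  have hy0 : 0 ≤ y := sub_nonneg.mpr (hsa.le_algebraMap_norm_self)
  have hyle : y ≤ algebraMap ℝ D t := by
    rw [hy']; exact sub_le_self _ hx
  have hyn : ‖y‖ ≤ t := by
    rw [CStarAlgebra.norm_le_iff_le_algebraMap y (norm_nonneg x) hy0]
    exact hyle
  have hφy : φ y = (t : ℂ) - φ x := by
    rw [hy', map_sub]
    congr 1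
    rw [Algebra.algebraMap_eq_smul_one, φ.map_smul_of_tower, h1]
    simp
  have h2 : ‖(t:ℂ) - φ x‖ ≤ t := by rw [← hφy]; exact (hc y).trans hyn
  have h3 : (t:ℂ) - φ x = ((t - (φ x).re : ℝ) : ℂ) := by
    apply Complex.ext <;> simp [him]
  rw [h3, Complex.norm_real, Real.norm_eq_abs, abs_le] at h2
  linarith [h2.1]

open Unitization in
lemma exists_functional_extension {A C : Type*} [NonUnitalCStarAlgebra A] [NonUnitalCStarAlgebra C]
    (ω : A →⋆ₙₐ[ℂ] ℂ) (ι : A →⋆ₙₐ[ℂ] C) (hinj : Function.Injective ι) :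
    ∃ φ : Unitization ℂ C →L[ℂ] ℂ, (∀ x, ‖φ x‖ ≤ ‖x‖) ∧ φ 1 = 1 ∧
      ∀ a : A, φ (ι a : Unitization ℂ C) = ω a := by
  let Θ : Unitization ℂ A →⋆ₐ[ℂ] Unitization ℂ C := starMap ι
  have hΘinj : Function.Injective Θ := starMap_injective hinj
  have hΘiso : ∀ s, ‖Θ s‖ = ‖s‖ := fun s => NonUnitalStarAlgHom.norm_map Θ hΘinj s
  let ρ₀ : Unitization ℂ A →⋆ₐ[ℂ] ℂ := starLift ω
  have hρ₀ : ∀ s, ‖ρ₀ s‖ ≤ ‖s‖ := fun s => NonUnitalStarAlgHom.norm_apply_le ρ₀ s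
  let Θₗ : Unitization ℂ A →ₗ[ℂ] Unitization ℂ C := Θ.toLinearMap
  let p : Submodule ℂ (Unitization ℂ C) := LinearMap.range Θₗ
  let e : Unitization ℂ A ≃ₗ[ℂ] p := LinearEquiv.ofInjective Θₗ hΘinj
  have he : ∀ s, ((e s : p) : Unitization ℂ C) = Θ s := fun s => rfl
  let ρ : p →ₗ[ℂ] ℂ := (ρ₀.toLinearMap) ∘ₗ (e.symm.toLinearMap)
  have hρ : ∀ z : p, ‖ρ z‖ ≤ 1 * ‖z‖ := by
    intro z
    have h1 : ρ z = ρ₀ (e.symm z) := rfl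
    have h2 : ‖ρ₀ (e.symm z)‖ ≤ ‖(e.symm z : Unitization ℂ A)‖ := hρ₀ _
    have h3 : ‖(e.symm z : Unitization ℂ A)‖ = ‖(z : Unitization ℂ C)‖ := by
      rw [← hΘiso (e.symm z), ← he (e.symm z), e.apply_symm_apply]
    rw [h1, one_mul]
    rw [h3] at h2
    exact h2
  let f : p →L[ℂ] ℂ := ρ.mkContinuous 1 hρ
  obtain ⟨φ, hext, hnorm⟩ := exists_extension_norm_eq p f
  have hφc : ∀ x, ‖φ x‖ ≤ ‖x‖ := by
    intro x
    calc ‖φ x‖ ≤ ‖φ‖ * ‖x‖ := φ.le_opNorm x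
      _ ≤ 1 * ‖x‖ := by
          apply mul_le_mul_of_nonneg_right _ (norm_nonneg x)
          rw [hnorm]
          exact ρ.mkContinuous_norm_le zero_le_one hρ
      _ = ‖x‖ := one_mul _
  have hφΘ : ∀ s, φ (Θ s) = ρ₀ s := by
    intro s
    have : φ (e s : p) = f (e s) := hext (e s)
    rw [he s] at this
    rw [this]
    show ρ (e s) = ρ₀ s
    have : ρ (e s) = ρ₀ (e.symm (e s)) := rfl
    rw [this, e.symm_apply_apply]
  refine ⟨φ, hφc, ?_, ?_⟩
  · have h1 := hφΘ 1
    rw [map_one ρ₀] at h1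
    rw [← map_one Θ]
    exact h1
  · intro a
    have h2 := hφΘ (a : Unitization ℂ A)
    rw [show Θ (a : Unitization ℂ A) = (ι a : Unitization ℂ C) from starMap_inr ι a] at h2
    rw [h2]
    exact (starLift_symm_apply_apply ρ₀ a).symm.trans
      (congrFun (congrArg _ (starLift.symm_apply_apply ω)) a)

open scoped ComplexOrder

open Unitization Matrix in
lemma state_matrix_posSemidef {C : Type*} [NonUnitalCStarAlgebra C]
    (φ : Unitization ℂ C →L[ℂ] ℂ)
    (hc : ∀ x, ‖φ x‖ ≤ ‖x‖) (h1 : φ 1 = 1) {n : ℕ} (N : Matrix (Fin n) (Fin n) C) :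
    Matrix.PosSemidef (((star N * N : Matrix (Fin n) (Fin n) C)).map
      (fun c => φ (c : Unitization ℂ C))) := by
  letI : PartialOrder (Unitization ℂ C) := CStarAlgebra.spectralOrder _
  haveI : StarOrderedRing (Unitization ℂ C) := CStarAlgebra.spectralOrderedRing _
  haveI : Nontrivial (Unitization ℂ C) := inferInstance
  -- the linear functional `c ↦ φ ↑c` on `C`
  let L : C →ₗ[ℂ] ℂ :=
    { toFun := fun c => φ (c : Unitization ℂ C)
      map_add' := fun a b => by rw [Unitization.inr_add, map_add]
      map_smul' := fun r a => by rw [Unitization.inr_smul, _root_.map_smul, RingHom.id_apply] }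
  have hLpos : ∀ (m : ℕ) (w : Fin m → C), 0 ≤ L (∑ k, star (w k) * w k) := by
    intro m w
    have hsum : ((∑ k, star (w k) * w k : C) : Unitization ℂ C)
        = ∑ k, star ((w k : Unitization ℂ C)) * (w k : Unitization ℂ C) := by
      rw [show ((∑ k, star (w k) * w k : C) : Unitization ℂ C)
          = (inrNonUnitalAlgHom ℂ C) (∑ k, star (w k) * w k) from rfl, map_sum]
      simp only [inrNonUnitalAlgHom_toFun, Unitization.inr_mul, Unitization.inr_star]
    have hpos : (0 : Unitization ℂ C) ≤ ∑ k, star ((w k : Unitization ℂ C)) * (w k) :=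
      Finset.sum_nonneg fun k _ => star_mul_self_nonneg _
    have h7 := state_nonneg φ hc h1 (hsum ▸ hpos)
    rw [Complex.le_def]
    constructor
    · rw [Complex.zero_re]; exact h7.1
    · rw [Complex.zero_im]; exact h7.2.symm
  have hLstar : ∀ c : C, φ ((star c : C) : Unitization ℂ C)
      = starRingEnd ℂ (φ (c : Unitization ℂ C)) := by
    intro c
    rw [Unitization.inr_star, state_star_apply φ hc h1]
  have hM : star (star N * N : Matrix (Fin n) (Fin n) C) = star N * N := by
    rw [StarMul.star_mul, star_star]
  rw [Matrix.posSemidef_iff_dotProduct_mulVec]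
  constructor
  · -- Hermitian
    ext i j
    have h2 : (star N * N : Matrix (Fin n) (Fin n) C) j i
        = star ((star N * N : Matrix (Fin n) (Fin n) C) i j) := by
      conv_lhs => rw [← hM]
      rw [Matrix.star_eq_conjTranspose, Matrix.conjTranspose_apply]
    show star (((star N * N : Matrix (Fin n) (Fin n) C)).map
      (fun c => φ (c : Unitization ℂ C)) j i) = _
    rw [Matrix.map_apply, Matrix.map_apply, h2]
    rw [show ∀ z : ℂ, star z = starRingEnd ℂ z from fun z => rfl]
    rw [hLstar, Complex.conj_conj]
  · intro x
    -- compute the quadratic form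
    have hdot : dotProduct (star x)
        ((((star N * N : Matrix (Fin n) (Fin n) C)).map
          (fun c => φ (c : Unitization ℂ C))) *ᵥ x)
        = L (∑ i, ∑ j, (starRingEnd ℂ (x i) * x j) • (star N * N : Matrix (Fin n) (Fin n) C) i j) := by
      simp only [map_sum, LinearMap.map_smul, dotProduct, Matrix.mulVec,
        Matrix.map_apply, Pi.star_apply, smul_eq_mul, Finset.mul_sum]
      refine Finset.sum_congr rfl fun i _ => Finset.sum_congr rfl fun j _ => ?_
      show starRingEnd ℂ (x i) * (φ _ * x j) = starRingEnd ℂ (x i) * x j * φ _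
      ring
    have halg : (∑ i, ∑ j, (starRingEnd ℂ (x i) * x j) • (star N * N : Matrix (Fin n) (Fin n) C) i j)
        = ∑ k, star (∑ j, x j • N k j) * (∑ j, x j • N k j) := by
      have expand : ∀ k, star (∑ j, x j • N k j) * (∑ j, x j • N k j)
          = ∑ i, ∑ j, (starRingEnd ℂ (x i) * x j) • (star (N k i) * N k j) := by
        intro k
        rw [star_sum, Finset.sum_mul_sum]
        refine Finset.sum_congr rfl fun i _ => Finset.sum_congr rfl fun j _ => ?_
        rw [star_smul, smul_mul_smul_comm]
        rfl
      rw [Finset.sum_congr rfl fun k _ => expand k]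
      symm
      rw [Finset.sum_comm]
      refine Finset.sum_congr rfl fun i _ => ?_
      rw [Finset.sum_comm]
      refine Finset.sum_congr rfl fun j _ => ?_
      rw [Matrix.mul_apply, Finset.smul_sum]
      refine Finset.sum_congr rfl fun k _ => ?_
      rw [Matrix.star_eq_conjTranspose, Matrix.conjTranspose_apply]
    rw [hdot, halg]
    exact hLpos n _



open scoped MatrixOrder in
lemma posSemidef_exists_eq_conjTranspose_mul_self {n : ℕ} {A : Matrix (Fin n) (Fin n) ℂ}
    (hA : A.PosSemidef) : ∃ B : Matrix (Fin n) (Fin n) ℂ, A = B.conjTranspose * B := by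
  classical
  obtain ⟨X, hX, -, rfl⟩ := CFC.exists_sqrt_of_isSelfAdjoint_of_quasispectrumRestricts
    hA.isHermitian (QuasispectrumRestricts.nnreal_of_nonneg hA.nonneg)
  exact ⟨X, by rw [← Matrix.star_eq_conjTranspose, hX.star_eq]⟩

open Unitization Matrix in
lemma exists_ccp_retraction {G : Type} [Group G] [TopologicalSpace G] [DiscreteTopology G]
    (β : GAct G (BoundedContinuousFunction G ℂ))
    (hβ : ∀ (g : G) (f : BoundedContinuousFunction G ℂ) (h : G),
      (β.act g f) h = f (g⁻¹ * h))
    {C : Type} [NonUnitalCStarAlgebra C] (γ : GAct G C)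
    (ι : BoundedContinuousFunction G ℂ → C)
    (hι : IsGEmbedding β γ ι) :
    ∃ ψ : C → BoundedContinuousFunction G ℂ,
      IsCcp ψ ∧ Equivariant γ β ψ ∧ ∀ b, ψ (ι b) = b := by
  obtain ⟨⟨hadd, hsmul, hmul, hstar⟩, hinj, hequiv⟩ := hι
  -- bundle `ι` as a non-unital star algebra homomorphism
  let ι' : BoundedContinuousFunction G ℂ →⋆ₙₐ[ℂ] C :=
    { toFun := ι
      map_smul' := hsmul
      map_zero' := by have h0 := hsmul 0 0; simpa using h0
      map_add' := hadd
      map_mul' := hmul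
      map_star' := hstar }
  -- the evaluation-at-identity state on `ℓ∞(G)`
  let ω : BoundedContinuousFunction G ℂ →⋆ₙₐ[ℂ] ℂ :=
    { toFun := fun b => b 1
      map_smul' := fun c b => rfl
      map_zero' := rfl
      map_add' := fun a b => rfl
      map_mul' := fun a b => rfl
      map_star' := fun b => rfl }
  obtain ⟨φ, hφc, hφ1, hφι⟩ := exists_functional_extension ω ι' hinj
  -- the retraction
  let val : G → C → ℂ := fun g c => φ ((γ.act g⁻¹ c : C) : Unitization ℂ C)
  have hvb : ∀ (c : C) (g : G), ‖val g c‖ ≤ ‖c‖ := by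
    intro c g
    calc ‖val g c‖ ≤ ‖((γ.act g⁻¹ c : C) : Unitization ℂ C)‖ := hφc _
      _ = ‖γ.act g⁻¹ c‖ := Unitization.norm_inr _
      _ = ‖c‖ := γ.isometry _ _
  let ψ : C → BoundedContinuousFunction G ℂ := fun c =>
    BoundedContinuousFunction.ofNormedAddCommGroup (fun g => val g c)
      continuous_of_discreteTopology ‖c‖ (hvb c)
  have hψ : ∀ c g, ψ c g = val g c := fun c g => rfl
  have hψadd : ∀ a b, ψ (a + b) = ψ a + ψ b := by
    intro a b
    ext g
    rw [BoundedContinuousFunction.add_apply, hψ, hψ, hψ]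
    show φ _ = φ _ + φ _
    rw [γ.map_add, Unitization.inr_add, map_add]
  have hψsmul : ∀ (c : ℂ) (a : C), ψ (c • a) = c • ψ a := by
    intro c a
    ext g
    rw [BoundedContinuousFunction.smul_apply, hψ, hψ]
    show φ _ = c • φ _
    rw [γ.map_smul, Unitization.inr_smul, _root_.map_smul]
  refine ⟨ψ, ⟨hψadd, hψsmul, ?_, ?_⟩, ?_, ?_⟩
  · -- contractive
    intro c
    exact BoundedContinuousFunction.norm_ofNormedAddCommGroup_le _ (norm_nonneg c) _
  · -- completely positive
    rintro n M ⟨N, rfl⟩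
    classical
    let Ng : G → Matrix (Fin n) (Fin n) C := fun g => N.map (γ.act g⁻¹)
    -- `γ.act g⁻¹` as a linear map
    let γₗ : G → C →ₗ[ℂ] C := fun g =>
      { toFun := γ.act g⁻¹
        map_add' := γ.map_add g⁻¹
        map_smul' := fun c a => γ.map_smul g⁻¹ c a }
    have hMg : ∀ g, (star N * N : Matrix (Fin n) (Fin n) C).map (γ.act g⁻¹)
        = star (Ng g) * Ng g := by
      intro g
      ext i j
      rw [Matrix.map_apply, Matrix.mul_apply]
      rw [show γ.act g⁻¹ (∑ k, (star N) i k * N k j) = γₗ g (∑ k, (star N) i k * N k j) from rfl]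
      rw [map_sum, Matrix.mul_apply]
      refine Finset.sum_congr rfl fun k _ => ?_
      show γ.act g⁻¹ ((star N) i k * N k j) = (star (Ng g)) i k * (Ng g) k j
      rw [Matrix.star_eq_conjTranspose, Matrix.star_eq_conjTranspose,
        Matrix.conjTranspose_apply, Matrix.conjTranspose_apply]
      show γ.act g⁻¹ (star (N k i) * N k j) = star ((Ng g) k i) * (Ng g) k j
      rw [γ.map_mul, γ.map_star]
      rfl
    have hP : ∀ g, Matrix.PosSemidef ((star (Ng g) * Ng g : Matrix (Fin n) (Fin n) C).map
        (fun c => φ (c : Unitization ℂ C))) :=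
      fun g => state_matrix_posSemidef φ hφc hφ1 (Ng g)
    choose Q hQ using fun g => posSemidef_exists_eq_conjTranspose_mul_self (hP g)
    have hdiag : ∀ g i, ((Q g)ᴴ * Q g) i i
        = φ ((γ.act g⁻¹ ((star N * N : Matrix (Fin n) (Fin n) C) i i) : C) : Unitization ℂ C) := by
      intro g i
      rw [← hQ g, Matrix.map_apply, ← hMg g, Matrix.map_apply]
    have hQb : ∀ g k i, ‖Q g k i‖ ≤ Real.sqrt ‖(star N * N : Matrix (Fin n) (Fin n) C) i i‖ := by
      intro g k i
      have h1 : ((Q g)ᴴ * Q g) i i = ((∑ m, Complex.normSq (Q g m i) : ℝ) : ℂ) := by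
        rw [Matrix.mul_apply]
        push_cast
        refine Finset.sum_congr rfl fun m _ => ?_
        rw [Matrix.conjTranspose_apply, Complex.normSq_eq_conj_mul_self]
        rfl
      have h2 : Complex.normSq (Q g k i) ≤ (((Q g)ᴴ * Q g) i i).re := by
        rw [h1, Complex.ofReal_re]
        exact Finset.single_le_sum (f := fun m => Complex.normSq (Q g m i))
          (fun m _ => Complex.normSq_nonneg _) (Finset.mem_univ k)
      have h3 : (((Q g)ᴴ * Q g) i i).re ≤ ‖(star N * N : Matrix (Fin n) (Fin n) C) i i‖ := by
        rw [hdiag g i]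
        calc (φ _).re ≤ ‖φ _‖ := Complex.re_le_norm _
          _ = ‖φ ((γ.act g⁻¹ ((star N * N : Matrix (Fin n) (Fin n) C) i i) : C) :
              Unitization ℂ C)‖ := rfl
          _ ≤ ‖(star N * N : Matrix (Fin n) (Fin n) C) i i‖ := hvb _ g
      have h4 : Complex.normSq (Q g k i) ≤ ‖(star N * N : Matrix (Fin n) (Fin n) C) i i‖ :=
        h2.trans h3
      rw [Complex.norm_def]
      exact Real.sqrt_le_sqrt h4
    let N' : Matrix (Fin n) (Fin n) (BoundedContinuousFunction G ℂ) :=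
      Matrix.of fun k i => BoundedContinuousFunction.ofNormedAddCommGroup
        (fun g => Q g k i) continuous_of_discreteTopology _ (fun g => hQb g k i)
    have hN' : ∀ k i g, N' k i g = Q g k i := fun k i g => rfl
    refine ⟨N', ?_⟩
    ext i j g
    have eL : (((star N * N : Matrix (Fin n) (Fin n) C)).map ψ i j) g
        = ∑ k, starRingEnd ℂ (Q g k i) * Q g k j := by
      rw [Matrix.map_apply, hψ]
      have lhs : val g ((star N * N : Matrix (Fin n) (Fin n) C) i j) = ((Q g)ᴴ * Q g) i j := by
        show φ _ = _
        rw [← hQ g, Matrix.map_apply, ← hMg g, Matrix.map_apply]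
      rw [lhs, Matrix.mul_apply]
      refine Finset.sum_congr rfl fun k _ => ?_
      rw [Matrix.conjTranspose_apply]
      rfl
    have eR : (((star N' * N') : Matrix (Fin n) (Fin n) (BoundedContinuousFunction G ℂ)) i j) g
        = ∑ k, starRingEnd ℂ (Q g k i) * Q g k j := by
      rw [Matrix.mul_apply, BoundedContinuousFunction.coe_sum, Finset.sum_apply]
      refine Finset.sum_congr rfl fun k _ => ?_
      rw [BoundedContinuousFunction.coe_mul, Pi.mul_apply,
        Matrix.star_eq_conjTranspose, Matrix.conjTranspose_apply,
        BoundedContinuousFunction.star_apply, hN', hN']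
      rfl
    rw [eL, eR]
  · -- equivariance
    intro h c
    ext g
    rw [hψ, hβ h (ψ c) g, hψ]
    show φ _ = φ _
    congr 2
    rw [← γ.act_mul, _root_.mul_inv_rev, inv_inv]
  · -- retraction property
    intro b
    ext g
    rw [hψ]
    show φ ((γ.act g⁻¹ (ι b) : C) : Unitization ℂ C) = b g
    rw [← hequiv g⁻¹ b]
    rw [show (ι (β.act g⁻¹ b) : C) = ι' (β.act g⁻¹ b) from rfl, hφι]
    show (β.act g⁻¹ b) 1 = b g
    rw [hβ, inv_inv, mul_one]


/-- For any discrete group `G`, the maximal and injective crossed-product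
norms on `C_c(G, ℓ∞(G))` coincide, where `ℓ∞(G)` (the bounded functions on `G`, realized as
`G →ᵇ ℂ` for discrete `G`) carries the left translation action:
`ℓ∞(G) ⋊_max G = ℓ∞(G) ⋊_inj G`. -/
theorem linfty_maxNorm_eq_injNorm
    {G : Type} [Group G] [TopologicalSpace G] [IsTopologicalGroup G] [DiscreteTopology G]
    (maxN : CPNorm G) (hmax : CcpFunctorial maxN)
    (β : GAct G (BoundedContinuousFunction G ℂ))
    (hβ : ∀ (g : G) (f : BoundedContinuousFunction G ℂ) (h : G),
      (β.act g f) h = f (g⁻¹ * h)) :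
    ∀ f : G → BoundedContinuousFunction G ℂ, CcFun f →
      maxN (BoundedContinuousFunction G ℂ) β f =
        injNorm maxN (BoundedContinuousFunction G ℂ) β f := by
  intro f hf
  rw [injNorm]
  set S : Set ℝ := { r : ℝ | ∃ (B : Type) (_ : NonUnitalCStarAlgebra B) (β' : GAct G B)
    (ι : BoundedContinuousFunction G ℂ → B),
    IsGEmbedding β β' ι ∧ r = maxN B β' (ι ∘ f) } with hS
  have hmem : maxN (BoundedContinuousFunction G ℂ) β f ∈ S := by
    refine ⟨BoundedContinuousFunction G ℂ, inferInstance, β, id,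
      ⟨⟨fun a b => rfl, fun c a => rfl, fun a b => rfl, fun a => rfl⟩,
        fun a b h => h, fun g a => rfl⟩, ?_⟩
    rw [Function.id_comp]
  have hlb : ∀ r ∈ S, maxN (BoundedContinuousFunction G ℂ) β f ≤ r := by
    rintro r ⟨B, instB, β', ι, hemb, rfl⟩
    obtain ⟨ψ, hccp, hequiv, hretr⟩ := exists_ccp_retraction β hβ β' ι hemb
    have hι0 : ι 0 = 0 := by
      have h0 := hemb.1.2.1 0 0
      simpa using h0
    have hcc : CcFun (ι ∘ f) :=
      ⟨continuous_of_discreteTopology, HasCompactSupport.comp_left hf.2 hι0⟩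
    have hkey := hmax B instB (BoundedContinuousFunction G ℂ) inferInstance β' β ψ hccp hequiv
      (ι ∘ f) hcc
    have heq : ψ ∘ (ι ∘ f) = f := funext fun g => hretr (f g)
    rwa [heq] at hkey
  exact le_antisymm (le_csInf ⟨_, hmem⟩ hlb)
    (csInf_le ⟨maxN (BoundedContinuousFunction G ℂ) β f, hlb⟩ hmem)
end
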